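/- Let p be a prime, n ≥ 1, Γ a complete set of representatives of ℤ^n/pℤ^n containing 0 with Γ' = Γ \ {0}, F_p a complete set of representatives of ℤ/pℤ containing 0 with F_p' = F_p \ {0}, and η(l,ν) ∈ Γ' the unique element with η(l,ν) ≡ ρ(l)ν (mod pℤ^n), where ρ(l) is the multiplicative inverse of l mod p. Let G : ℤ → ℝ be a finitely supported 1-D lowpass filter with dilation p, and let g : ℤ^n → ℝ be its prime coset sum lowpass filter (the filter of the mask C_{n,p}[Ĝ]). Let y : ℤ^n → ℝ and w_ν : ℤ^n → ℝ, ν ∈ Γ', be finitely supported, and define y'(k) := y(pk) + (1/((p−1)p^n)) Σ_{ν∈Γ'} Σ_{l∈F_p'} Σ_{m∈ℤ, m≡l (mod p)} G(m)·w_ν(k − (ν − η(l,ν)m)/p). Then the argument k − (ν − η(l,ν)m)/p always lies in ℤ^n, and for every ω ∈ ℝ^n: (1/p^n) Σ_{k∈ℤ^n} y'(k) e^{-ik·ω} = (y(p·))^(ω) + Σ_{ν∈Γ'} \overline{(g(ν+p·))^(ω)}·(1/p^n) Σ_{k∈ℤ^n} w_ν(k)e^{-ik·ω}, where (a(ν+p·))^(ω)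 := (1/p^n) Σ_{k∈ℤ^n} a(ν+pk) e^{-ik·ω}. In other words, the decomposition Step (ii) of the fast prime coset sum algorithm computes exactly Y' = Y_0 + Σ_ν G_ν W_ν in the polyphase domain. -/

import Mathlib

open scoped Real Classical

noncomputable section

/-- `eC x = e^{-ix}` as a complex number. -/
def eC (x : ℝ) : ℂ := Complex.exp (-(Complex.I * (x : ℂ)))

/-- **Correctness of Step (ii) of the fast prime coset sum decomposition algorithm.**
With `g` the prime coset sum lowpass filter of the 1-D lowpass filter `G`, the coarse
coefficients
`y'(k) = y(pk) + (1/((p-1)p^n)) Σ_{ν∈Γ'} Σ_{l∈F_p'} Σ_{m≡l (p)} G(m) w_ν(k - (ν-η(l,ν)m)/p)`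
are well defined (the argument always lies in `ℤ^n`) and satisfy, in the frequency
domain, `Y'(ω) = (y(p·))^(ω) + Σ_{ν∈Γ'} conj((g(ν+p·))^(ω)) W_ν(ω)`. -/
lemma eC_add (x y : ℝ) : eC (x + y) = eC x * eC y := by
  simp [eC, ← Complex.exp_add]; ring_nf

lemma eC_zero : eC 0 = 1 := by simp [eC]

lemma eC_conj (x : ℝ) : (starRingEnd ℂ) (eC x) = eC (-x) := by
  rw [eC, ← Complex.exp_conj]
  simp [eC]

-- 1D uniqueness
lemma onedim_unique (S : Finset ℤ) (a : ℤ → ℂ)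
    (h : ∀ t : ℝ, ∑ k ∈ S, a k * eC ((k : ℝ) * t) = 0) :
    ∀ k ∈ S, a k = 0 := by
  intro k0 hk0
  have h2 : ∀ t : ℝ, ∑ k ∈ S, a k * Complex.exp ((Complex.I * ((k0 : ℂ) - k)) * t) = 0 := by
    intro t
    have := h t
    have : Complex.exp (Complex.I * k0 * t) * ∑ k ∈ S, a k * eC ((k : ℝ) * t) = 0 := by
      rw [this, mul_zero]
    rw [Finset.mul_sum] at this
    rw [← this]
    apply Finset.sum_congr rfl
    intro k _
    rw [eC, show Complex.I * ((k0:ℂ) - (k:ℂ)) * (t:ℂ) =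
        -(Complex.I * (((k:ℝ) * t : ℝ) : ℂ)) + Complex.I * (k0:ℂ) * (t:ℂ) by push_cast; ring,
      Complex.exp_add]
    ring
  have h3 : ∫ t in (0:ℝ)..(2*Real.pi), ∑ k ∈ S, a k * Complex.exp ((Complex.I * ((k0 : ℂ) - k)) * t) = 0 := by
    simp [h2]
  rw [intervalIntegral.integral_finset_sum] at h3
  · have key : ∀ k ∈ S, (∫ t in (0:ℝ)..(2*Real.pi), a k * Complex.exp ((Complex.I * ((k0 : ℂ) - k)) * t)) = if k = k0 then a k0 * (2*Real.pi) else 0 := by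
      intro k _
      rw [intervalIntegral.integral_const_mul]
      by_cases hkk : k = k0
      · subst hkk
        simp [Complex.exp_zero]
      · have hc : Complex.I * ((k0 : ℂ) - k) ≠ 0 := by
          simp only [mul_ne_zero_iff, sub_ne_zero]
          exact ⟨Complex.I_ne_zero, by exact_mod_cast fun hh => hkk (by exact_mod_cast hh.symm)⟩
        rw [integral_exp_mul_complex hc]
        have : Complex.exp (Complex.I * ((k0:ℂ) - k) * (2*Real.pi)) = 1 := by
          have := Complex.exp_int_mul_two_pi_mul_I (k0 - k)
          rw [← this]
          congr 1
          push_cast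
          ring
        simp [this, hkk]
    rw [Finset.sum_congr rfl key, Finset.sum_ite_eq' S k0 (fun _ => a k0 * (2*Real.pi))] at h3
    simp only [hk0, if_true] at h3
    rcases mul_eq_zero.mp h3 with h | h
    · exact h
    · exfalso
      have : (2*Real.pi : ℂ) ≠ 0 := by
        simp [Real.pi_ne_zero]
      exact this h
  · intro k _
    apply Continuous.intervalIntegrable
    continuity

lemma digits_zero (B : ℤ) (hB : 0 < B) : ∀ (N : ℕ) (d : ℕ → ℤ), (∀ i, |d i| < B) →
    (∑ i ∈ Finset.range N, d i * B ^ i = 0) → ∀ i < N, d i = 0 := by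
  intro N
  induction N with
  | zero => intro d _ _ i hi; omega
  | succ N ih =>
    intro d hd hsum i hi
    rw [Finset.sum_range_succ'] at hsum
    have hfac : ∑ i ∈ Finset.range N, d (i + 1) * B ^ (i + 1) =
        B * ∑ i ∈ Finset.range N, d (i + 1) * B ^ i := by
      rw [Finset.mul_sum]
      exact Finset.sum_congr rfl fun j _ => by ring
    rw [hfac] at hsum
    have hd0 : d 0 = 0 := by
      have hdvd : B ∣ d 0 := ⟨-(∑ i ∈ Finset.range N, d (i + 1) * B ^ i), by linarith⟩
      exact Int.eq_zero_of_abs_lt_dvd hdvd (hd 0)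
    have hrest : ∑ i ∈ Finset.range N, d (i + 1) * B ^ i = 0 := by
      have : B * ∑ i ∈ Finset.range N, d (i + 1) * B ^ i = 0 := by
        simp [hd0] at hsum; simpa using hsum
      exact (mul_eq_zero.mp this).resolve_left (by omega)
    rcases Nat.eq_zero_or_pos i with h0 | hpos
    · subst h0; exact hd0
    · obtain ⟨j, rfl⟩ : ∃ j, i = j + 1 := ⟨i - 1, by omega⟩
      exact ih (fun i => d (i + 1)) (fun i => hd (i + 1)) hrest j (by omega)

lemma multidim_unique (n : ℕ) (S : Finset (Fin n → ℤ)) (a : (Fin n → ℤ) → ℂ)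
    (h : ∀ ω : Fin n → ℝ, ∑ k ∈ S, a k * eC (∑ i, (k i : ℝ) * ω i) = 0) :
    ∀ k ∈ S, a k = 0 := by
  classical
  set M : ℕ := S.sup (fun k => Finset.univ.sup (fun i => (k i).natAbs)) with hM
  set B : ℤ := 2 * (M : ℤ) + 1 with hB
  have hBpos : 0 < B := by positivity
  have hbound : ∀ k ∈ S, ∀ i, |k i| ≤ (M : ℤ) := by
    intro k hk i
    have h1 : (k i).natAbs ≤ Finset.univ.sup (fun i => (k i).natAbs) :=
      Finset.le_sup (f := fun i => (k i).natAbs) (Finset.mem_univ i)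
    have h2 : Finset.univ.sup (fun i => (k i).natAbs) ≤ M :=
      Finset.le_sup (f := fun k : Fin n → ℤ => Finset.univ.sup fun i => (k i).natAbs) hk
    rw [Int.abs_eq_natAbs]
    exact_mod_cast le_trans h1 h2
  set enc : (Fin n → ℤ) → ℤ := fun k => ∑ i : Fin n, k i * B ^ (i : ℕ) with henc
  have hinj : ∀ k ∈ S, ∀ k' ∈ S, enc k = enc k' → k = k' := by
    intro k hk k' hk' he
    have hsum : ∑ i ∈ Finset.range n,
        (fun j => if hj : j < n then k ⟨j, hj⟩ - k' ⟨j, hj⟩ else 0) i * B ^ i = 0 := by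
      have h1 : ∑ i ∈ Finset.range n,
          (fun j => if hj : j < n then k ⟨j, hj⟩ - k' ⟨j, hj⟩ else 0) i * B ^ i
          = ∑ i : Fin n, (k i - k' i) * B ^ (i : ℕ) := by
        rw [← Fin.sum_univ_eq_sum_range]
        exact Finset.sum_congr rfl fun i _ => by simp [i.isLt]
      rw [h1]
      have : ∑ i : Fin n, (k i - k' i) * B ^ (i : ℕ) = enc k - enc k' := by
        rw [henc, ← Finset.sum_sub_distrib]
        exact Finset.sum_congr rfl fun i _ => by ring
      rw [this, he, sub_self]
    have hz := digits_zero B hBpos n _ (fun i => by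
      by_cases hj : i < n
      · simp only [hj, dif_pos]
        have hb1 := hbound k hk ⟨i, hj⟩
        have hb2 := hbound k' hk' ⟨i, hj⟩
        have habs : |k ⟨i, hj⟩ - k' ⟨i, hj⟩| ≤ |k ⟨i, hj⟩| + |k' ⟨i, hj⟩| := abs_sub _ _
        rw [hB]
        linarith
      · simp [hj]
        positivity) hsum
    funext i
    exact sub_eq_zero.mp (by simpa using hz i.1 i.isLt)
  -- reduce to 1D
  set b : ℤ → ℂ := fun j => ∑ k ∈ S.filter (fun k => enc k = j), a k with hb
  have h1d : ∀ t : ℝ, ∑ j ∈ S.image enc, b j * eC ((j : ℝ) * t) = 0 := by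
    intro t
    have := h (fun i => (B : ℝ) ^ (i : ℕ) * t)
    have hrw : ∀ k ∈ S, a k * eC (∑ i, (k i : ℝ) * ((B:ℝ) ^ (i:ℕ) * t))
        = a k * eC ((enc k : ℝ) * t) := by
      intro k _
      congr 2
      rw [henc]
      push_cast
      rw [Finset.sum_mul]
      exact Finset.sum_congr rfl fun i _ => by ring
    rw [Finset.sum_congr rfl hrw] at this
    rw [← this]
    rw [← Finset.sum_fiberwise_of_maps_to (fun k hk => Finset.mem_image_of_mem enc hk)
      (fun k => a k * eC ((enc k : ℝ) * t))]
    exact Finset.sum_congr rfl fun j _ => by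
      rw [hb, Finset.sum_mul]
      exact Finset.sum_congr rfl fun k hk => by
        rw [(Finset.mem_filter.mp hk).2]
  have hbz := onedim_unique (S.image enc) b h1d
  intro k0 hk0
  have hfib : S.filter (fun k => enc k = enc k0) = {k0} :=
    Finset.eq_singleton_iff_unique_mem.mpr
      ⟨Finset.mem_filter.mpr ⟨hk0, rfl⟩,
       fun x hx => hinj x (Finset.mem_filter.mp hx).1 k0 hk0 (Finset.mem_filter.mp hx).2⟩
  have hb0 := hbz (enc k0) (Finset.mem_image_of_mem enc hk0)
  rw [hb] at hb0
  simp only [hfib, Finset.sum_singleton] at hb0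
  exact hb0

/-- The explicit prime coset sum filter built from `G`. -/
def hfil (n p : ℕ) (Γ : Finset (Fin n → ℤ)) (G : ℤ → ℝ) (SG : Finset ℤ) :
    (Fin n → ℤ) → ℝ := fun k =>
  (if k = 0 then (p : ℝ) * (1 - (p : ℝ) ^ (n - 1)) / ((p : ℝ) - 1) else 0) +
    (1 / ((p : ℝ) - 1)) * ∑ μ ∈ Γ.erase 0, ∑ K ∈ SG, if K • μ = k then G K else 0

def Tfil (n p : ℕ) (Γ : Finset (Fin n → ℤ)) (SG : Finset ℤ) : Finset (Fin n → ℤ) :=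
  insert 0 (((Γ.erase 0) ×ˢ SG).image fun q => q.2 • q.1)

lemma hfil_support (n p : ℕ) (Γ : Finset (Fin n → ℤ)) (G : ℤ → ℝ) (SG : Finset ℤ) :
    Function.support (hfil n p Γ G SG) ⊆ ↑(Tfil n p Γ SG) := by
  intro k hk
  by_contra hkT
  apply hk
  simp only [Tfil, Finset.coe_insert, Set.mem_insert_iff, Finset.coe_image,
    Set.mem_image, Finset.mem_coe, Finset.mem_product, not_or, not_exists] at hkT
  obtain ⟨hk0, him⟩ := hkT
  have hz : ∀ μ ∈ Γ.erase 0, ∀ K ∈ SG, (if K • μ = k then G K else 0) = 0 := by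
    intro μ hμ K hK
    rw [if_neg]
    intro he
    exact him (μ, K) ⟨⟨hμ, hK⟩, he⟩
  simp only [hfil, if_neg hk0, zero_add]
  rw [Finset.sum_congr rfl (fun μ hμ => Finset.sum_eq_zero (hz μ hμ)), Finset.sum_const_zero,
    mul_zero]

lemma hfil_mask (n : ℕ) (hn : 1 ≤ n) (p : ℕ) (hp2 : 2 ≤ p) (Γ : Finset (Fin n → ℤ))
    (G : ℤ → ℝ) (SG : Finset ℤ) (hSG : Function.support G ⊆ ↑SG) (ω : Fin n → ℝ) :
    (1 / (p : ℂ) ^ n) * ∑ᶠ k : Fin n → ℤ,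
        ((hfil n p Γ G SG) k : ℂ) * eC (∑ i, (k i : ℝ) * ω i) =
      (1 / (((p : ℂ) - 1) * (p : ℂ) ^ (n - 1))) *
        (1 - (p : ℂ) ^ (n - 1) +
          ∑ ν ∈ Γ.erase 0,
            (1 / (p : ℂ)) * ∑ᶠ K : ℤ, (G K : ℂ) * eC ((K : ℝ) * ∑ i, ω i * (ν i : ℝ))) := by
  have hp0 : (p : ℂ) ≠ 0 := by exact_mod_cast (by omega : p ≠ 0)
  have hp1 : (p : ℂ) - 1 ≠ 0 := by
    rw [sub_ne_zero]
    exact_mod_cast (by omega : p ≠ 1)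
  have hfs : Function.support
      (fun k : Fin n → ℤ => ((hfil n p Γ G SG) k : ℂ) * eC (∑ i, (k i : ℝ) * ω i)) ⊆
      ↑(Tfil n p Γ SG) := by
    intro k hk
    apply hfil_support n p Γ G SG
    intro h0
    apply hk
    simp [h0]
  rw [finsum_eq_sum_of_support_subset _ hfs]
  -- finsum over K on the RHS
  have hKfs : ∀ ν : Fin n → ℤ, (∑ᶠ K : ℤ, (G K : ℂ) * eC ((K : ℝ) * ∑ i, ω i * (ν i : ℝ)))
      = ∑ K ∈ SG, (G K : ℂ) * eC ((K : ℝ) * ∑ i, ω i * (ν i : ℝ)) := by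
    intro ν
    apply finsum_eq_sum_of_support_subset
    intro K hK
    apply hSG
    intro h0
    apply hK
    simp [h0]
  simp only [hKfs]
  -- expand hfil and split the sum
  simp only [hfil, Complex.ofReal_add, Complex.ofReal_mul, Complex.ofReal_sum,
    apply_ite Complex.ofReal, Complex.ofReal_zero, Complex.ofReal_div, Complex.ofReal_one,
    Complex.ofReal_sub, Complex.ofReal_natCast, Complex.ofReal_pow, Complex.ofReal_ofNat]
  simp only [add_mul, Finset.sum_add_distrib]
  -- first piece
  have h1 : ∑ k ∈ Tfil n p Γ SG,
      (if k = 0 then (p : ℂ) * (1 - (p : ℂ) ^ (n - 1)) / ((p : ℂ) - 1) else 0) *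
        eC (∑ i, (k i : ℝ) * ω i) =
      (p : ℂ) * (1 - (p : ℂ) ^ (n - 1)) / ((p : ℂ) - 1) := by
    have : ∀ k ∈ Tfil n p Γ SG,
        (if k = 0 then (p : ℂ) * (1 - (p : ℂ) ^ (n - 1)) / ((p : ℂ) - 1) else 0) *
          eC (∑ i, (k i : ℝ) * ω i) =
        (if k = 0 then ((p : ℂ) * (1 - (p : ℂ) ^ (n - 1)) / ((p : ℂ) - 1)) *
          eC (∑ i, (k i : ℝ) * ω i) else 0) := by
      intro k _
      split_ifs <;> simp
    rw [Finset.sum_congr rfl this, Finset.sum_ite_eq' (Tfil n p Γ SG) 0]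
    rw [if_pos (show (0 : Fin n → ℤ) ∈ Tfil n p Γ SG from Finset.mem_insert_self _ _)]
    have : (∑ i, ((0 : Fin n → ℤ) i : ℝ) * ω i) = 0 := by simp
    rw [this, eC_zero, mul_one]
  rw [h1]
  -- second piece
  have h2 : ∑ k ∈ Tfil n p Γ SG,
      (1 / ((p : ℂ) - 1) * ∑ μ ∈ Γ.erase 0, ∑ K ∈ SG, if K • μ = k then (G K : ℂ) else 0) *
        eC (∑ i, (k i : ℝ) * ω i) =
      (1 / ((p : ℂ) - 1)) * ∑ μ ∈ Γ.erase 0, ∑ K ∈ SG,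
        (G K : ℂ) * eC (∑ i, (((K • μ : Fin n → ℤ)) i : ℝ) * ω i) := by
    simp only [mul_assoc, ← Finset.mul_sum]
    congr 1
    simp only [Finset.sum_mul, ite_mul, zero_mul]
    rw [Finset.sum_comm]
    refine Finset.sum_congr rfl fun μ hμ => ?_
    rw [Finset.sum_comm]
    refine Finset.sum_congr rfl fun K hK => ?_
    rw [Finset.sum_ite_eq (Tfil n p Γ SG) (K • μ)]
    rw [if_pos]
    exact Finset.mem_insert_of_mem (Finset.mem_image.mpr ⟨(μ, K),
      Finset.mem_product.mpr ⟨hμ, hK⟩, rfl⟩)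
  rw [h2]
  -- match exponents and constants
  have hexp : ∀ μ ∈ Γ.erase 0, ∀ K ∈ SG,
      (∑ i, (((K • μ : Fin n → ℤ)) i : ℝ) * ω i) = (K : ℝ) * ∑ i, ω i * (μ i : ℝ) := by
    intro μ _ K _
    rw [Finset.mul_sum]
    refine Finset.sum_congr rfl fun i _ => ?_
    simp only [Pi.smul_apply, smul_eq_mul]
    push_cast
    ring
  have h3 : ∑ μ ∈ Γ.erase 0, ∑ K ∈ SG,
      (G K : ℂ) * eC (∑ i, (((K • μ : Fin n → ℤ)) i : ℝ) * ω i) =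
      ∑ μ ∈ Γ.erase 0, ∑ K ∈ SG, (G K : ℂ) * eC ((K : ℝ) * ∑ i, ω i * (μ i : ℝ)) := by
    refine Finset.sum_congr rfl fun μ hμ => Finset.sum_congr rfl fun K hK => ?_
    rw [hexp μ hμ K hK]
  rw [h3]
  set X : ℂ := ∑ μ ∈ Γ.erase 0, ∑ K ∈ SG, (G K : ℂ) * eC ((K : ℝ) * ∑ i, ω i * (μ i : ℝ))
    with hX
  have hms : ∑ μ ∈ Γ.erase 0,
      (1 / (p:ℂ)) * ∑ K ∈ SG, (G K : ℂ) * eC ((K : ℝ) * ∑ i, ω i * (μ i : ℝ)) =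
      (1 / (p:ℂ)) * X := by
    rw [hX, Finset.mul_sum]
  rw [hms]
  have hpow : (p : ℂ) ^ n = (p : ℂ) ^ (n - 1) * p := by
    rw [← pow_succ]
    congr 1
    omega
  have hpn1 : (p : ℂ) ^ (n - 1) ≠ 0 := pow_ne_zero _ hp0
  rw [hpow]
  field_simp

lemma g_eq_hfil (n : ℕ) (hn : 1 ≤ n) (p : ℕ) (hp2 : 2 ≤ p) (Γ : Finset (Fin n → ℤ))
    (G : ℤ → ℝ) (hGfin : (Function.support G).Finite)
    (g : (Fin n → ℤ) → ℝ) (hgfin : (Function.support g).Finite)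
    (hmask : ∀ ω : Fin n → ℝ,
      (1 / (p : ℂ) ^ n) * ∑ᶠ k : Fin n → ℤ, (g k : ℂ) * eC (∑ i, (k i : ℝ) * ω i) =
      (1 / (((p : ℂ) - 1) * (p : ℂ) ^ (n - 1))) *
        (1 - (p : ℂ) ^ (n - 1) +
          ∑ ν ∈ Γ.erase 0,
            (1 / (p : ℂ)) * ∑ᶠ K : ℤ, (G K : ℂ) * eC ((K : ℝ) * ∑ i, ω i * (ν i : ℝ)))) :
    ∀ k, g k = hfil n p Γ G hGfin.toFinset k := by
  classical
  set SG := hGfin.toFinset with hSGdef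
  have hSG : Function.support G ⊆ ↑SG := by simp [hSGdef]
  set S : Finset (Fin n → ℤ) := hgfin.toFinset ∪ Tfil n p Γ SG with hSdef
  have hp0 : (p : ℂ) ≠ 0 := by exact_mod_cast (by omega : p ≠ 0)
  have hcoef : (1 / (p : ℂ) ^ n) ≠ 0 := by
    simp [pow_ne_zero, hp0]
  have hgsum : ∀ ω : Fin n → ℝ, ∑ᶠ k : Fin n → ℤ, (g k : ℂ) * eC (∑ i, (k i : ℝ) * ω i)
      = ∑ k ∈ S, (g k : ℂ) * eC (∑ i, (k i : ℝ) * ω i) := by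
    intro ω
    apply finsum_eq_sum_of_support_subset
    intro k hk
    have : g k ≠ 0 := fun h0 => hk (by simp [h0])
    exact Finset.mem_union_left _ (hgfin.mem_toFinset.mpr this)
  have hhsum : ∀ ω : Fin n → ℝ,
      ∑ᶠ k : Fin n → ℤ, ((hfil n p Γ G SG) k : ℂ) * eC (∑ i, (k i : ℝ) * ω i)
      = ∑ k ∈ S, ((hfil n p Γ G SG) k : ℂ) * eC (∑ i, (k i : ℝ) * ω i) := by
    intro ω
    apply finsum_eq_sum_of_support_subset
    intro k hk
    have : hfil n p Γ G SG k ≠ 0 := fun h0 => hk (by simp [h0])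
    exact Finset.mem_union_right _ (hfil_support n p Γ G SG this)
  have hz := multidim_unique n S (fun k => (g k : ℂ) - ((hfil n p Γ G SG) k : ℂ)) ?_
  · intro k
    by_cases hkS : k ∈ S
    · have := hz k hkS
      have : (g k : ℂ) = ((hfil n p Γ G SG) k : ℂ) := by
        have := sub_eq_zero.mp this
        exact this
      exact_mod_cast this
    · have h1 : g k = 0 := by
        by_contra h0
        exact hkS (Finset.mem_union_left _ (hgfin.mem_toFinset.mpr h0))
      have h2 : hfil n p Γ G SG k = 0 := by
        by_contra h0
        exact hkS (Finset.mem_union_right _ (hfil_support n p Γ G SG h0))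
      rw [h1, h2]
  · intro ω
    have hmm := (hmask ω).trans (hfil_mask n hn p hp2 Γ G SG hSG ω).symm
    have := mul_left_cancel₀ hcoef hmm
    rw [hgsum ω, hhsum ω] at this
    simp only [sub_mul]
    rw [Finset.sum_sub_distrib, this, sub_self]

theorem fast_algorithm_step_ii
    (n : ℕ) (hn : 1 ≤ n) (p : ℕ) (hp : p.Prime)
    (Γ : Finset (Fin n → ℤ)) (hΓ0 : (0 : Fin n → ℤ) ∈ Γ)
    (hΓ : ∀ k : Fin n → ℤ, ∃! ν : Fin n → ℤ,
      ν ∈ Γ ∧ ∃ m : Fin n → ℤ, k = ν + (p : ℤ) • m)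
    (Fp : Finset ℤ) (hFp0 : (0 : ℤ) ∈ Fp)
    (hFp : ∀ k : ℤ, ∃! l : ℤ, l ∈ Fp ∧ ∃ m : ℤ, k = l + p * m)
    (ρ : ℤ → ℤ)
    (hρ : ∀ l ∈ Fp.erase 0, ρ l ∈ Fp.erase 0 ∧ (p : ℤ) ∣ (l * ρ l - 1))
    (η : ℤ → (Fin n → ℤ) → (Fin n → ℤ))
    (hη : ∀ l ∈ Fp.erase 0, ∀ ν ∈ Γ.erase 0,
      η l ν ∈ Γ.erase 0 ∧ ∀ i, (p : ℤ) ∣ (η l ν i - ρ l * ν i))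
    (G : ℤ → ℝ) (hGfin : (Function.support G).Finite)
    (hGlow : (1 / (p : ℝ)) * ∑ᶠ K : ℤ, G K = 1)
    -- `g` is the prime coset sum lowpass filter of `G`
    (g : (Fin n → ℤ) → ℝ) (hgfin : (Function.support g).Finite)
    (hmask : ∀ ω : Fin n → ℝ,
      (1 / (p : ℂ) ^ n) * ∑ᶠ k : Fin n → ℤ, (g k : ℂ) * eC (∑ i, (k i : ℝ) * ω i) =
      (1 / (((p : ℂ) - 1) * (p : ℂ) ^ (n - 1))) *
        (1 - (p : ℂ) ^ (n - 1) +
          ∑ ν ∈ Γ.erase 0,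
            (1 / (p : ℂ)) * ∑ᶠ K : ℤ, (G K : ℂ) * eC ((K : ℝ) * ∑ i, ω i * (ν i : ℝ))))
    (y : (Fin n → ℤ) → ℝ) (hyfin : (Function.support y).Finite)
    (w : (Fin n → ℤ) → (Fin n → ℤ) → ℝ)
    (hwfin : ∀ ν : Fin n → ℤ, (Function.support (w ν)).Finite)
    (y' : (Fin n → ℤ) → ℝ)
    (hy' : ∀ k : Fin n → ℤ, y' k =
      y ((p : ℤ) • k) + (1 / (((p : ℝ) - 1) * (p : ℝ) ^ n)) *
        ∑ ν ∈ Γ.erase 0, ∑ l ∈ Fp.erase 0,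
          ∑ᶠ m ∈ {m : ℤ | (p : ℤ) ∣ (m - l)},
            G m * w ν (k - fun i => (ν i - m * η l ν i) / (p : ℤ))) :
    (∀ ν ∈ Γ.erase 0, ∀ l ∈ Fp.erase 0, ∀ m : ℤ, (p : ℤ) ∣ (m - l) →
      ∀ i, (p : ℤ) ∣ (ν i - m * η l ν i)) ∧
    ∀ ω : Fin n → ℝ,
      (1 / (p : ℂ) ^ n) * ∑ᶠ k : Fin n → ℤ, (y' k : ℂ) * eC (∑ i, (k i : ℝ) * ω i) =
      (1 / (p : ℂ) ^ n) *
          ∑ᶠ k : Fin n → ℤ, (y ((p : ℤ) • k) : ℂ) * eC (∑ i, (k i : ℝ) * ω i) +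
        ∑ ν ∈ Γ.erase 0,
          (starRingEnd ℂ) ((1 / (p : ℂ) ^ n) *
              ∑ᶠ k : Fin n → ℤ, (g (ν + (p : ℤ) • k) : ℂ) * eC (∑ i, (k i : ℝ) * ω i)) *
            ((1 / (p : ℂ) ^ n) *
              ∑ᶠ k : Fin n → ℤ, (w ν k : ℂ) * eC (∑ i, (k i : ℝ) * ω i)) := by
  classical
  have hp2 : 2 ≤ p := hp.two_le
  have hpz : (p : ℤ) ≠ 0 := by exact_mod_cast (by omega : p ≠ 0)
  -- Part 1
  have part1 : ∀ ν ∈ Γ.erase 0, ∀ l ∈ Fp.erase 0, ∀ m : ℤ, (p : ℤ) ∣ (m - l) →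
      ∀ i, (p : ℤ) ∣ (ν i - m * η l ν i) := by
    intro ν hν l hl m hm i
    obtain ⟨-, hηc⟩ := hη l hl ν hν
    obtain ⟨-, hρd⟩ := hρ l hl
    have key : ν i - m * η l ν i =
        -((m - l) * η l ν i) - l * (η l ν i - ρ l * ν i) - (l * ρ l - 1) * ν i := by ring
    rw [key]
    exact dvd_sub (dvd_sub (dvd_neg.mpr (hm.mul_right _)) ((hηc i).mul_left l))
      (hρd.mul_right _)
  refine ⟨part1, ?_⟩
  -- uniqueness of representatives
  have hΓu : ∀ μ ∈ Γ, ∀ μ' ∈ Γ, (∀ i, (p : ℤ) ∣ (μ i - μ' i)) → μ = μ' := by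
    intro μ hμ μ' hμ' hd
    obtain ⟨ν₀, -, hu⟩ := hΓ μ
    have e1 : μ = ν₀ := hu μ ⟨hμ, 0, by simp⟩
    have e2 : μ' = ν₀ := hu μ' ⟨hμ', fun i => (μ i - μ' i) / p, ?_⟩
    · rw [e1, e2]
    · funext i
      simp only [Pi.add_apply, Pi.smul_apply, smul_eq_mul]
      rw [Int.mul_ediv_cancel' (hd i)]
      ring
  have hFpu : ∀ l ∈ Fp, ∀ l' ∈ Fp, (p : ℤ) ∣ (l - l') → l = l' := by
    intro l hl l' hl' hd
    obtain ⟨l₀, -, hu⟩ := hFp l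
    have e1 : l = l₀ := hu l ⟨hl, 0, by simp⟩
    have e2 : l' = l₀ := hu l' ⟨hl', (l - l') / p, by
      rw [Int.mul_ediv_cancel' hd]; ring⟩
    rw [e1, e2]
  have hΓmod : ∀ ν ∈ Γ.erase 0, ¬ ∀ i, (p : ℤ) ∣ ν i := by
    intro ν hν hall
    exact (Finset.mem_erase.mp hν).1
      (hΓu ν (Finset.mem_erase.mp hν).2 0 hΓ0 (fun i => by simpa using hall i))
  -- the filter g equals the explicit filter hfil
  set SG := hGfin.toFinset with hSGdef
  have hSG : Function.support G ⊆ ↑SG := by simp [hSGdef]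
  have hgh : ∀ k, g k = hfil n p Γ G SG k :=
    g_eq_hfil n hn p hp2 Γ G hGfin g hgfin hmask
  -- representative of K in Fp
  set lrep : ℤ → ℤ := fun K => (hFp K).exists.choose with hlrepdef
  have hlrep : ∀ K : ℤ, lrep K ∈ Fp ∧ (p : ℤ) ∣ (K - lrep K) := by
    intro K
    obtain ⟨h1, m, hm⟩ := (hFp K).exists.choose_spec
    exact ⟨h1, show (p : ℤ) ∣ K - (hFp K).exists.choose from ⟨m, by omega⟩⟩
  intro ω
  have negdiv : ∀ x : ℤ, (p : ℤ) ∣ x → (-x) / (p : ℤ) = -(x / (p : ℤ)) := by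
    intro x hx
    obtain ⟨c, rfl⟩ := hx
    rw [Int.mul_ediv_cancel_left _ hpz, ← mul_neg, Int.mul_ediv_cancel_left _ hpz]
  have hGnu : ∀ ν ∈ Γ.erase 0,
      (starRingEnd ℂ) ((1 / (p : ℂ) ^ n) *
          ∑ᶠ k : Fin n → ℤ, (g (ν + (p : ℤ) • k) : ℂ) * eC (∑ i, (k i : ℝ) * ω i)) =
      (1 / (((p : ℂ) - 1) * (p : ℂ) ^ n)) *
        ∑ q ∈ ((Fp.erase 0) ×ˢ SG).filter (fun q => (p : ℤ) ∣ (q.2 - q.1)),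
          (G q.2 : ℂ) * eC (∑ i, (((ν i - q.2 * η q.1 ν i) / (p : ℤ) : ℤ) : ℝ) * ω i) := by
    intro ν hν
    have hνΓ := (Finset.mem_erase.mp hν).2
    have hνp := hΓmod ν hν
    have hne0 : ∀ k : Fin n → ℤ, ν + (p : ℤ) • k ≠ 0 := by
      intro k hk
      apply hνp
      intro i
      have h1 := congrFun hk i
      simp only [Pi.add_apply, Pi.smul_apply, smul_eq_mul, Pi.zero_apply] at h1
      exact ⟨-k i, by linarith⟩
    set Tν : Finset (Fin n → ℤ) :=
      ((Γ.erase 0) ×ˢ SG).image (fun q => fun i => (q.2 * q.1 i - ν i) / (p : ℤ)) with hTν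
    have hsupp : ∀ k : Fin n → ℤ, hfil n p Γ G SG (ν + (p : ℤ) • k) ≠ 0 → k ∈ Tν := by
      intro k hk
      rw [hfil, if_neg (hne0 k), zero_add] at hk
      have hs := (mul_ne_zero_iff.mp hk).2
      obtain ⟨μ, hμ, hμne⟩ := Finset.exists_ne_zero_of_sum_ne_zero hs
      obtain ⟨K, hK, hKne⟩ := Finset.exists_ne_zero_of_sum_ne_zero hμne
      have hcond : K • μ = ν + (p : ℤ) • k := (ite_ne_right_iff.mp hKne).1
      apply Finset.mem_image.mpr
      refine ⟨(μ, K), Finset.mem_product.mpr ⟨hμ, hK⟩, ?_⟩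
      funext i
      have h1 := congrFun hcond i
      simp only [Pi.smul_apply, smul_eq_mul, Pi.add_apply] at h1
      show (K * μ i - ν i) / (p : ℤ) = k i
      rw [show K * μ i - ν i = (p : ℤ) * k i by linarith, Int.mul_ediv_cancel_left _ hpz]
    have hfs : Function.support (fun k : Fin n → ℤ =>
        (g (ν + (p : ℤ) • k) : ℂ) * eC (∑ i, (k i : ℝ) * ω i)) ⊆ ↑Tν := by
      intro k hk
      apply hsupp
      intro h0
      apply hk
      simp only [hgh (ν + (p : ℤ) • k), h0, Complex.ofReal_zero, zero_mul]
    rw [finsum_eq_sum_of_support_subset _ hfs]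
    have hterm : ∀ k ∈ Tν, (g (ν + (p : ℤ) • k) : ℂ) * eC (∑ i, (k i : ℝ) * ω i)
        = (1 / ((p : ℂ) - 1)) * ∑ μ ∈ Γ.erase 0, ∑ K ∈ SG,
            (if K • μ = ν + (p : ℤ) • k then (G K : ℂ) * eC (∑ i, (k i : ℝ) * ω i) else 0) := by
      intro k _
      rw [hgh, hfil, if_neg (hne0 k), zero_add]
      simp only [Complex.ofReal_mul, Complex.ofReal_sum, apply_ite Complex.ofReal,
        Complex.ofReal_zero, Complex.ofReal_div, Complex.ofReal_one, Complex.ofReal_sub,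
        Complex.ofReal_natCast]
      rw [mul_assoc]
      congr 1
      rw [Finset.sum_mul]
      refine Finset.sum_congr rfl fun μ _ => ?_
      rw [Finset.sum_mul]
      exact Finset.sum_congr rfl fun K _ => by rw [ite_mul, zero_mul]
    rw [Finset.sum_congr rfl hterm, ← Finset.mul_sum]
    rw [Finset.sum_comm]
    have hswap : ∀ μ ∈ Γ.erase 0,
        ∑ k ∈ Tν, ∑ K ∈ SG,
          (if K • μ = ν + (p : ℤ) • k then (G K : ℂ) * eC (∑ i, (k i : ℝ) * ω i) else 0)
        = ∑ K ∈ SG, ∑ k ∈ Tν,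
          (if K • μ = ν + (p : ℤ) • k then (G K : ℂ) * eC (∑ i, (k i : ℝ) * ω i) else 0) :=
      fun μ _ => Finset.sum_comm
    rw [Finset.sum_congr rfl hswap]
    have hinner : ∀ μ ∈ Γ.erase 0, ∀ K ∈ SG,
        ∑ k ∈ Tν, (if K • μ = ν + (p : ℤ) • k then (G K : ℂ) * eC (∑ i, (k i : ℝ) * ω i) else 0)
        = if ∀ i, (p : ℤ) ∣ (K * μ i - ν i) then
            (G K : ℂ) * eC (∑ i, (((K * μ i - ν i) / (p : ℤ) : ℤ) : ℝ) * ω i) else 0 := by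
      intro μ hμ K hK
      by_cases hdiv : ∀ i, (p : ℤ) ∣ (K * μ i - ν i)
      · rw [if_pos hdiv]
        have hiff : ∀ k : Fin n → ℤ,
            (K • μ = ν + (p : ℤ) • k) ↔ ((fun i => (K * μ i - ν i) / (p : ℤ)) = k) := by
          intro k
          constructor
          · intro he
            funext i
            have h1 := congrFun he i
            simp only [Pi.smul_apply, smul_eq_mul, Pi.add_apply] at h1
            show (K * μ i - ν i) / (p : ℤ) = k i
            rw [show K * μ i - ν i = (p : ℤ) * k i by linarith,
              Int.mul_ediv_cancel_left _ hpz]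
          · intro he
            funext i
            simp only [Pi.smul_apply, smul_eq_mul, Pi.add_apply]
            have h1 : (p : ℤ) * ((K * μ i - ν i) / (p : ℤ)) = K * μ i - ν i :=
              Int.mul_ediv_cancel' (hdiv i)
            have h2 := congrFun he i
            rw [← h2]
            linarith
        rw [Finset.sum_congr rfl (fun k _ => if_congr (hiff k) rfl rfl)]
        rw [Finset.sum_ite_eq Tν (fun i => (K * μ i - ν i) / (p : ℤ))]
        rw [if_pos (Finset.mem_image.mpr ⟨(μ, K), Finset.mem_product.mpr ⟨hμ, hK⟩, rfl⟩)]
      · rw [if_neg hdiv]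
        apply Finset.sum_eq_zero
        intro k _
        rw [if_neg]
        intro he
        apply hdiv
        intro i
        have h1 := congrFun he i
        simp only [Pi.smul_apply, smul_eq_mul, Pi.add_apply] at h1
        exact ⟨k i, by linarith⟩
    rw [Finset.sum_congr rfl (fun μ hμ => Finset.sum_congr rfl (fun K hK => hinner μ hμ K hK))]
    rw [← Finset.sum_product', ← Finset.sum_filter]
    -- apply conjugation
    rw [map_mul, map_mul, map_sum]
    have hc1 : (starRingEnd ℂ) (1 / (p : ℂ) ^ n) = 1 / (p : ℂ) ^ n := by
      simp [map_div₀, map_pow]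
    have hc2 : (starRingEnd ℂ) (1 / ((p : ℂ) - 1)) = 1 / ((p : ℂ) - 1) := by
      simp [map_div₀]
    rw [hc1, hc2]
    set A : Finset ((Fin n → ℤ) × ℤ) :=
      ((Γ.erase 0) ×ˢ SG).filter (fun q => ∀ i, (p : ℤ) ∣ (q.2 * q.1 i - ν i)) with hA
    -- identify η (lrep K) ν = μ on A
    have hkey : ∀ q ∈ A, lrep q.2 ∈ Fp.erase 0 ∧ η (lrep q.2) ν = q.1 := by
      intro q hq
      obtain ⟨hqm, hqd⟩ := Finset.mem_filter.mp hq
      obtain ⟨hμm, hKm⟩ := Finset.mem_product.mp hqm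
      set μ := q.1
      set K := q.2
      have hl0 : lrep K ≠ 0 := by
        intro h0
        apply hνp
        intro i
        have hKd : (p : ℤ) ∣ K := by
          have := (hlrep K).2
          rw [h0] at this
          simpa using this
        have : ν i = K * μ i - (K * μ i - ν i) := by ring
        rw [this]
        exact dvd_sub (hKd.mul_right _) (hqd i)
      have hlF : lrep K ∈ Fp.erase 0 := Finset.mem_erase.mpr ⟨hl0, (hlrep K).1⟩
      refine ⟨hlF, ?_⟩
      obtain ⟨hηm, hηc⟩ := hη (lrep K) hlF ν hν
      obtain ⟨-, hρd⟩ := hρ (lrep K) hlF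
      apply hΓu _ (Finset.mem_erase.mp hηm).2 _ (Finset.mem_erase.mp hμm).2
      intro i
      have hid : η (lrep K) ν i - μ i =
          (η (lrep K) ν i - ρ (lrep K) * ν i) + ρ (lrep K) * -(K * μ i - ν i) +
            (ρ (lrep K) * (K - lrep K)) * μ i + (lrep K * ρ (lrep K) - 1) * μ i := by
        ring
      rw [hid]
      exact dvd_add (dvd_add (dvd_add (hηc i) ((dvd_neg.mpr (hqd i)).mul_left _))
        (((hlrep K).2.mul_left _).mul_right _)) (hρd.mul_right _)
    have hbij : ∑ q ∈ A, (starRingEnd ℂ)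
          ((G q.2 : ℂ) * eC (∑ i, (((q.2 * q.1 i - ν i) / (p : ℤ) : ℤ) : ℝ) * ω i))
        = ∑ q ∈ ((Fp.erase 0) ×ˢ SG).filter (fun q => (p : ℤ) ∣ (q.2 - q.1)),
          (G q.2 : ℂ) * eC (∑ i, (((ν i - q.2 * η q.1 ν i) / (p : ℤ) : ℤ) : ℝ) * ω i) := by
      refine Finset.sum_nbij' (fun q => (lrep q.2, q.2)) (fun b => (η b.1 ν, b.2))
        ?_ ?_ ?_ ?_ ?_
      · intro q hq
        obtain ⟨hqm, hqd⟩ := Finset.mem_filter.mp hq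
        obtain ⟨-, hKm⟩ := Finset.mem_product.mp hqm
        exact Finset.mem_filter.mpr ⟨Finset.mem_product.mpr ⟨(hkey q hq).1, hKm⟩,
          (hlrep q.2).2⟩
      · intro b hb
        obtain ⟨hbm, hbd⟩ := Finset.mem_filter.mp hb
        obtain ⟨hlm, hmm⟩ := Finset.mem_product.mp hbm
        refine Finset.mem_filter.mpr ⟨Finset.mem_product.mpr ⟨(hη b.1 hlm ν hν).1, hmm⟩, ?_⟩
        intro i
        have := part1 ν hν b.1 hlm b.2 hbd i
        rw [show b.2 * η b.1 ν i - ν i = -(ν i - b.2 * η b.1 ν i) by ring]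
        exact dvd_neg.mpr this
      · intro q hq
        have := (hkey q hq).2
        exact Prod.ext (by simpa using this) rfl
      · intro b hb
        obtain ⟨hbm, hbd⟩ := Finset.mem_filter.mp hb
        obtain ⟨hlm, hmm⟩ := Finset.mem_product.mp hbm
        have hl : lrep b.2 = b.1 := by
          apply hFpu _ (hlrep b.2).1 _ (Finset.mem_erase.mp hlm).2
          have h1 := (hlrep b.2).2
          have h2 : lrep b.2 - b.1 = (b.2 - b.1) - (b.2 - lrep b.2) := by ring
          rw [h2]
          exact dvd_sub hbd h1
        exact Prod.ext (by simp [hl]) rfl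
      · intro q hq
        obtain ⟨hqm, hqd⟩ := Finset.mem_filter.mp hq
        have hη' : η (lrep q.2) ν = q.1 := (hkey q hq).2
        simp only [hη']
        congr 1
        rw [show (∑ i, (((ν i - q.2 * q.1 i) / (p : ℤ) : ℤ) : ℝ) * ω i) =
            -(∑ i, (((q.2 * q.1 i - ν i) / (p : ℤ) : ℤ) : ℝ) * ω i) from ?_]
        · rw [map_mul, Complex.conj_ofReal, eC_conj]
        · rw [← Finset.sum_neg_distrib]
          refine Finset.sum_congr rfl fun i _ => ?_
          rw [show ν i - q.2 * q.1 i = -(q.2 * q.1 i - ν i) by ring, negdiv _ (hqd i)]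
          push_cast
          ring
    rw [hbij]
    have hpc0 : (p : ℂ) ≠ 0 := by exact_mod_cast (by omega : p ≠ 0)
    have hpc1 : (p : ℂ) - 1 ≠ 0 := by rw [sub_ne_zero]; exact_mod_cast (by omega : p ≠ 1)
    have hpcn : (p : ℂ) ^ n ≠ 0 := pow_ne_zero _ hpc0
    rw [← mul_assoc]
    congr 1
    field_simp
  -- Step D: the decomposition formula
  set B : Finset (ℤ × ℤ) :=
    ((Fp.erase 0) ×ˢ SG).filter (fun q => (p : ℤ) ∣ (q.2 - q.1)) with hBdef
  -- convert the finsum over the congruence class to a finite sum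
  have hfinsum : ∀ (ν₀ : Fin n → ℤ) (l : ℤ) (k : Fin n → ℤ),
      (∑ᶠ m ∈ {m : ℤ | (p : ℤ) ∣ (m - l)},
        G m * w ν₀ (k - fun i => (ν₀ i - m * η l ν₀ i) / (p : ℤ)))
      = ∑ m ∈ SG.filter (fun m => (p : ℤ) ∣ (m - l)),
          G m * w ν₀ (k - fun i => (ν₀ i - m * η l ν₀ i) / (p : ℤ)) := by
    intro ν₀ l k
    apply finsum_mem_eq_sum_of_inter_support_eq
    ext x
    simp only [Set.mem_inter_iff, Set.mem_setOf_eq, Function.mem_support, Finset.coe_filter,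
      Finset.mem_coe, Finset.mem_filter]
    constructor
    · rintro ⟨hd, hne⟩
      have hGx : G x ≠ 0 := fun h0 => hne (by rw [h0, zero_mul])
      exact ⟨⟨hGfin.mem_toFinset.mpr hGx, hd⟩, hne⟩
    · rintro ⟨⟨-, hd⟩, hne⟩
      exact ⟨hd, hne⟩
  -- rewrite y' with finite sums over B
  have hy'2 : ∀ k : Fin n → ℤ, y' k =
      y ((p : ℤ) • k) + (1 / (((p : ℝ) - 1) * (p : ℝ) ^ n)) *
        ∑ ν₀ ∈ Γ.erase 0, ∑ b ∈ B,
          G b.2 * w ν₀ (k - fun i => (ν₀ i - b.2 * η b.1 ν₀ i) / (p : ℤ)) := by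
    intro k
    rw [hy' k]
    congr 1
    congr 1
    refine Finset.sum_congr rfl fun ν₀ _ => ?_
    rw [Finset.sum_congr rfl (fun l _ => hfinsum ν₀ l k)]
    calc ∑ l ∈ Fp.erase 0, ∑ m ∈ SG.filter (fun m => (p : ℤ) ∣ (m - l)),
          G m * w ν₀ (k - fun i => (ν₀ i - m * η l ν₀ i) / (p : ℤ))
        = ∑ l ∈ Fp.erase 0, ∑ m ∈ SG, if (p : ℤ) ∣ (m - l) then
            G m * w ν₀ (k - fun i => (ν₀ i - m * η l ν₀ i) / (p : ℤ)) else 0 := by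
          exact Finset.sum_congr rfl fun l _ => Finset.sum_filter _ _
      _ = ∑ b ∈ (Fp.erase 0) ×ˢ SG, if (p : ℤ) ∣ (b.2 - b.1) then
            G b.2 * w ν₀ (k - fun i => (ν₀ i - b.2 * η b.1 ν₀ i) / (p : ℤ)) else 0 := by
          rw [Finset.sum_product]
      _ = ∑ b ∈ B, G b.2 * w ν₀ (k - fun i => (ν₀ i - b.2 * η b.1 ν₀ i) / (p : ℤ)) := by
          rw [hBdef, Finset.sum_filter]
  -- the index finset for y'
  set Q : Finset ((Fin n → ℤ) × ℤ × ℤ) := (Γ.erase 0) ×ˢ ((Fp.erase 0) ×ˢ SG) with hQdef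
  set U : Finset (Fin n → ℤ) :=
    (hyfin.toFinset.image (fun j => fun i => j i / (p : ℤ))) ∪
      Q.biUnion (fun q => ((hwfin q.1).toFinset.image
        (fun c => c + fun i => (q.1 i - q.2.2 * η q.2.1 q.1 i) / (p : ℤ)))) with hUdef
  have hy'U : ∀ k : Fin n → ℤ, y' k ≠ 0 → k ∈ U := by
    intro k hk
    rw [hy'2 k] at hk
    by_cases hy0 : y ((p : ℤ) • k) = 0
    · have hsne : (∑ ν₀ ∈ Γ.erase 0, ∑ b ∈ B,
          G b.2 * w ν₀ (k - fun i => (ν₀ i - b.2 * η b.1 ν₀ i) / (p : ℤ))) ≠ 0 := by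
        intro h0
        exact hk (by rw [hy0, h0, mul_zero, add_zero])
      obtain ⟨ν₀, hν₀, h1⟩ := Finset.exists_ne_zero_of_sum_ne_zero hsne
      obtain ⟨b, hb, h2⟩ := Finset.exists_ne_zero_of_sum_ne_zero h1
      have hw : w ν₀ (k - fun i => (ν₀ i - b.2 * η b.1 ν₀ i) / (p : ℤ)) ≠ 0 :=
        fun h0 => h2 (by rw [h0, mul_zero])
      obtain ⟨hbm, -⟩ := Finset.mem_filter.mp hb
      apply Finset.mem_union_right
      apply Finset.mem_biUnion.mpr
      refine ⟨(ν₀, b), Finset.mem_product.mpr ⟨hν₀, hbm⟩, Finset.mem_image.mpr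
        ⟨k - fun i => (ν₀ i - b.2 * η b.1 ν₀ i) / (p : ℤ),
          (hwfin ν₀).mem_toFinset.mpr hw, ?_⟩⟩
      simp only [sub_add_cancel]
    · apply Finset.mem_union_left
      refine Finset.mem_image.mpr ⟨(p : ℤ) • k, hyfin.mem_toFinset.mpr hy0, ?_⟩
      funext i
      simp only [Pi.smul_apply, smul_eq_mul]
      exact Int.mul_ediv_cancel_left _ hpz
  -- replace the three finsums with finite sums
  have hy'sum : ∑ᶠ k : Fin n → ℤ, (y' k : ℂ) * eC (∑ i, (k i : ℝ) * ω i)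
      = ∑ k ∈ U, (y' k : ℂ) * eC (∑ i, (k i : ℝ) * ω i) := by
    apply finsum_eq_sum_of_support_subset
    intro k hk
    exact hy'U k (fun h0 => hk (by simp [h0]))
  have hysum : ∑ᶠ k : Fin n → ℤ, (y ((p : ℤ) • k) : ℂ) * eC (∑ i, (k i : ℝ) * ω i)
      = ∑ k ∈ U, (y ((p : ℤ) • k) : ℂ) * eC (∑ i, (k i : ℝ) * ω i) := by
    apply finsum_eq_sum_of_support_subset
    intro k hk
    have hy0 : y ((p : ℤ) • k) ≠ 0 :=
      fun h0 => hk (by simp only [h0, Complex.ofReal_zero, zero_mul])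
    apply Finset.mem_union_left
    refine Finset.mem_image.mpr ⟨(p : ℤ) • k, hyfin.mem_toFinset.mpr hy0, ?_⟩
    funext i
    simp only [Pi.smul_apply, smul_eq_mul]
    exact Int.mul_ediv_cancel_left _ hpz
  -- shифt lemma for w
  have hwfinC : ∀ ν₀ : Fin n → ℤ, (Function.support
      (fun a : Fin n → ℤ => (w ν₀ a : ℂ) * eC (∑ i, (a i : ℝ) * ω i))).Finite := by
    intro ν₀
    apply Set.Finite.subset (hwfin ν₀)
    intro a ha
    exact fun h0 => ha (by simp [h0])
  have hshift : ∀ ν₀ ∈ Γ.erase 0, ∀ b ∈ B,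
      ∑ k ∈ U, (w ν₀ (k - fun i => (ν₀ i - b.2 * η b.1 ν₀ i) / (p : ℤ)) : ℂ) *
          eC (∑ i, (k i : ℝ) * ω i)
      = eC (∑ i, ((((ν₀ i - b.2 * η b.1 ν₀ i) / (p : ℤ)) : ℤ) : ℝ) * ω i) *
          ∑ᶠ k : Fin n → ℤ, (w ν₀ k : ℂ) * eC (∑ i, (k i : ℝ) * ω i) := by
    intro ν₀ hν₀ b hb
    obtain ⟨hbm, -⟩ := Finset.mem_filter.mp hb
    have hsub : Function.support (fun k : Fin n → ℤ =>
        (w ν₀ (k - fun i => (ν₀ i - b.2 * η b.1 ν₀ i) / (p : ℤ)) : ℂ) *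
          eC (∑ i, (k i : ℝ) * ω i)) ⊆ ↑U := by
      intro k hk
      have hw : w ν₀ (k - fun i => (ν₀ i - b.2 * η b.1 ν₀ i) / (p : ℤ)) ≠ 0 :=
        fun h0 => hk (by simp [h0])
      apply Finset.mem_union_right
      apply Finset.mem_biUnion.mpr
      refine ⟨(ν₀, b), Finset.mem_product.mpr ⟨hν₀, hbm⟩, Finset.mem_image.mpr
        ⟨k - fun i => (ν₀ i - b.2 * η b.1 ν₀ i) / (p : ℤ),
          (hwfin ν₀).mem_toFinset.mpr hw, ?_⟩⟩
      simp only [sub_add_cancel]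
    rw [← finsum_eq_sum_of_support_subset _ hsub]
    rw [← finsum_comp_equiv (Equiv.addRight (fun i => (ν₀ i - b.2 * η b.1 ν₀ i) / (p : ℤ)))]
    simp only [Equiv.coe_addRight]
    have hpt : ∀ a : Fin n → ℤ,
        (w ν₀ ((a + fun i => (ν₀ i - b.2 * η b.1 ν₀ i) / (p : ℤ)) -
            fun i => (ν₀ i - b.2 * η b.1 ν₀ i) / (p : ℤ)) : ℂ) *
          eC (∑ i, (((a + fun i => (ν₀ i - b.2 * η b.1 ν₀ i) / (p : ℤ)) i : ℤ) : ℝ) * ω i)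
        = ((w ν₀ a : ℂ) * eC (∑ i, (a i : ℝ) * ω i)) *
            eC (∑ i, ((((ν₀ i - b.2 * η b.1 ν₀ i) / (p : ℤ)) : ℤ) : ℝ) * ω i) := by
      intro a
      rw [add_sub_cancel_right]
      have hsplit : (∑ i, (((a + fun i => (ν₀ i - b.2 * η b.1 ν₀ i) / (p : ℤ)) i : ℤ) : ℝ) * ω i)
          = (∑ i, (a i : ℝ) * ω i) +
            ∑ i, ((((ν₀ i - b.2 * η b.1 ν₀ i) / (p : ℤ)) : ℤ) : ℝ) * ω i := by
        rw [← Finset.sum_add_distrib]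
        refine Finset.sum_congr rfl fun i _ => ?_
        simp only [Pi.add_apply]
        push_cast
        ring
      rw [hsplit, eC_add]
      ring
    rw [finsum_congr hpt]
    rw [← finsum_mul]
    ring
  -- assemble
  rw [hy'sum, hysum]
  have hterm : ∀ k ∈ U, (y' k : ℂ) * eC (∑ i, (k i : ℝ) * ω i)
      = (y ((p : ℤ) • k) : ℂ) * eC (∑ i, (k i : ℝ) * ω i) +
        (1 / (((p : ℂ) - 1) * (p : ℂ) ^ n)) * ∑ ν₀ ∈ Γ.erase 0, ∑ b ∈ B,
          (G b.2 : ℂ) * ((w ν₀ (k - fun i => (ν₀ i - b.2 * η b.1 ν₀ i) / (p : ℤ)) : ℂ) *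
            eC (∑ i, (k i : ℝ) * ω i)) := by
    intro k _
    rw [hy'2 k]
    push_cast
    rw [add_mul]
    congr 1
    rw [mul_assoc]
    congr 1
    rw [Finset.sum_mul]
    refine Finset.sum_congr rfl fun ν₀ _ => ?_
    rw [Finset.sum_mul]
    refine Finset.sum_congr rfl fun b _ => ?_
    ring
  rw [Finset.sum_congr rfl hterm, Finset.sum_add_distrib, ← Finset.mul_sum]
  have hfinal : ∑ k ∈ U, ∑ ν₀ ∈ Γ.erase 0, ∑ b ∈ B,
      (G b.2 : ℂ) * ((w ν₀ (k - fun i => (ν₀ i - b.2 * η b.1 ν₀ i) / (p : ℤ)) : ℂ) *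
        eC (∑ i, (k i : ℝ) * ω i))
      = ∑ ν₀ ∈ Γ.erase 0,
          (∑ b ∈ B, (G b.2 : ℂ) *
            eC (∑ i, ((((ν₀ i - b.2 * η b.1 ν₀ i) / (p : ℤ)) : ℤ) : ℝ) * ω i)) *
          ∑ᶠ k : Fin n → ℤ, (w ν₀ k : ℂ) * eC (∑ i, (k i : ℝ) * ω i) := by
    rw [Finset.sum_comm]
    refine Finset.sum_congr rfl fun ν₀ hν₀ => ?_
    rw [Finset.sum_comm]
    rw [Finset.sum_mul]
    refine Finset.sum_congr rfl fun b hb => ?_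
    rw [← Finset.mul_sum, hshift ν₀ hν₀ b hb]
    ring
  rw [hfinal]
  rw [show ∑ ν₀ ∈ Γ.erase 0,
      (starRingEnd ℂ) ((1 / (p : ℂ) ^ n) *
          ∑ᶠ k : Fin n → ℤ, (g (ν₀ + (p : ℤ) • k) : ℂ) * eC (∑ i, (k i : ℝ) * ω i)) *
        ((1 / (p : ℂ) ^ n) *
          ∑ᶠ k : Fin n → ℤ, (w ν₀ k : ℂ) * eC (∑ i, (k i : ℝ) * ω i))
      = ∑ ν₀ ∈ Γ.erase 0,
          ((1 / (((p : ℂ) - 1) * (p : ℂ) ^ n)) *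
            ∑ b ∈ B, (G b.2 : ℂ) *
              eC (∑ i, ((((ν₀ i - b.2 * η b.1 ν₀ i) / (p : ℤ)) : ℤ) : ℝ) * ω i)) *
          ((1 / (p : ℂ) ^ n) *
            ∑ᶠ k : Fin n → ℤ, (w ν₀ k : ℂ) * eC (∑ i, (k i : ℝ) * ω i))
    from Finset.sum_congr rfl fun ν₀ hν₀ => by rw [hGnu ν₀ hν₀]]
  rw [mul_add]
  congr 1
  rw [← mul_assoc, Finset.mul_sum]
  exact Finset.sum_congr rfl fun ν₀ _ => by ring
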